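/- Let H be a 2-regular graph on m ≥ 3 vertices with no 4-cycle (i.e., C_4-free). Then the graph G = K_1 * (K_1 + H), i.e., the join of a single vertex with the disjoint union of an isolated vertex and H, is K_{2,3}-saturated and has 2(m + 2) − 3 edges. -/

import Mathlib

open SimpleGraph

/-- `G` contains a subgraph isomorphic to the complete bipartite graph `K_{2,3}`. -/
def HasK23 {V : Type*} (G : SimpleGraph V) : Prop :=
  ∃ f : (Fin 2 ⊕ Fin 3) ↪ V,
    ∀ a b, (completeBipartiteGraph (Fin 2) (Fin 3)).Adj a b → G.Adj (f a) (f b)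

/-- `G` is `K_{2,3}`-saturated: `K_{2,3}`-free, but adding any edge between two
non-adjacent vertices creates a `K_{2,3}`. -/
def K23Saturated {V : Type*} (G : SimpleGraph V) : Prop :=
  ¬ HasK23 G ∧ ∀ u v : V, u ≠ v → ¬ G.Adj u v →
    HasK23 (G ⊔ SimpleGraph.fromEdgeSet {s(u, v)})

/-- The join `K₁ * (K₁ + H)`: an apex vertex `Sum.inl ()` joined to an isolated
vertex `Sum.inr (Sum.inl ())` together with a copy of `H`. -/
def apexPlusIsolated {m : ℕ} (H : SimpleGraph (Fin m)) :
    SimpleGraph (Unit ⊕ Unit ⊕ Fin m) :=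
  SimpleGraph.fromRel (fun x y =>
    x = Sum.inl () ∨
    ∃ a b : Fin m, x = Sum.inr (Sum.inr a) ∧ y = Sum.inr (Sum.inr b) ∧ H.Adj a b)

lemma hasK23_of {V : Type*} (G : SimpleGraph V) (x y p q r : V)
    (hxy : x ≠ y) (hpq : p ≠ q) (hpr : p ≠ r) (hqr : q ≠ r)
    (hxp : x ≠ p) (hxq : x ≠ q) (hxr : x ≠ r)
    (hyp : y ≠ p) (hyq : y ≠ q) (hyr : y ≠ r)
    (axp : G.Adj x p) (axq : G.Adj x q) (axr : G.Adj x r)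
    (ayp : G.Adj y p) (ayq : G.Adj y q) (ayr : G.Adj y r) :
    HasK23 G := by
  refine ⟨⟨Sum.elim ![x, y] ![p, q, r], ?_⟩, ?_⟩
  · rintro (a | a) (b | b) hab <;> fin_cases a <;> fin_cases b <;> simp_all
  · rintro (a | a) (b | b) hab <;> fin_cases a <;> fin_cases b <;>
      first
      | exact axp | exact axq | exact axr | exact ayp | exact ayq | exact ayr
      | exact axp.symm | exact axq.symm | exact axr.symm | exact ayp.symm | exact ayq.symm
      | exact ayr.symm | simp_all [completeBipartiteGraph, G.adj_comm]

namespace K23Aux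
variable {m : ℕ} {H : SimpleGraph (Fin m)}

abbrev A : Unit ⊕ Unit ⊕ Fin m := Sum.inl ()
abbrev I : Unit ⊕ Unit ⊕ Fin m := Sum.inr (Sum.inl ())
abbrev hv (i : Fin m) : Unit ⊕ Unit ⊕ Fin m := Sum.inr (Sum.inr i)

lemma adj_A {x : Unit ⊕ Unit ⊕ Fin m} (hx : x ≠ A) : (apexPlusIsolated H).Adj A x := by
  simp [apexPlusIsolated, SimpleGraph.fromRel_adj, Ne.symm hx]

lemma adj_hv {a b : Fin m} : (apexPlusIsolated H).Adj (hv a) (hv b) ↔ H.Adj a b := by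
  constructor
  · rintro h
    rw [apexPlusIsolated, SimpleGraph.fromRel_adj] at h
    rcases h with ⟨hne, (h|⟨a',b',h1,h2,h3⟩)|(h|⟨a',b',h1,h2,h3⟩)⟩ <;>
      simp_all [H.adj_comm]
  · intro h
    rw [apexPlusIsolated, SimpleGraph.fromRel_adj]
    exact ⟨by simp [H.ne_of_adj h], Or.inl (Or.inr ⟨a, b, rfl, rfl, h⟩)⟩

lemma adj_I {x : Unit ⊕ Unit ⊕ Fin m} : (apexPlusIsolated H).Adj I x ↔ x = A := by
  constructor
  · rintro h
    rw [apexPlusIsolated, SimpleGraph.fromRel_adj] at h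
    rcases h with ⟨hne, (h|⟨a',b',h1,h2,h3⟩)|(h|⟨a',b',h1,h2,h3⟩)⟩ <;> simp_all
  · rintro rfl
    exact ((adj_A (by simp)).symm)

lemma adj_cases {x y : Unit ⊕ Unit ⊕ Fin m} (h : (apexPlusIsolated H).Adj x y) :
    x = A ∨ y = A ∨ ∃ a b, x = hv a ∧ y = hv b ∧ H.Adj a b := by
  rw [apexPlusIsolated, SimpleGraph.fromRel_adj] at h
  rcases h with ⟨hne, (h|⟨a,b,h1,h2,h3⟩)|(h|⟨a,b,h1,h2,h3⟩)⟩
  · exact Or.inl h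
  · exact Or.inr (Or.inr ⟨a, b, h1, h2, h3⟩)
  · exact Or.inr (Or.inl h)
  · exact Or.inr (Or.inr ⟨b, a, h2, h1, h3.symm⟩)

lemma two_neighbors (hreg : ∀ v, (H.neighborSet v).ncard = 2) (v : Fin m) :
    ∃ a b, a ≠ b ∧ H.Adj v a ∧ H.Adj v b ∧ ∀ c, H.Adj v c → c = a ∨ c = b := by
  obtain ⟨a, b, hab, hs⟩ := Set.ncard_eq_two.mp (hreg v)
  refine ⟨a, b, hab, ?_, ?_, ?_⟩
  · have : a ∈ H.neighborSet v := hs ▸ (by simp)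
    exact this
  · have : b ∈ H.neighborSet v := hs ▸ (by simp)
    exact this
  · intro c hc
    have : c ∈ H.neighborSet v := hc
    rw [hs] at this
    simpa using this

lemma hv_of_adj {v : Fin m} {p : Unit ⊕ Unit ⊕ Fin m}
    (h : (apexPlusIsolated H).Adj (hv v) p) (hpA : p ≠ A) :
    ∃ p', p = hv p' ∧ H.Adj v p' := by
  rcases adj_cases h with h1 | h2 | ⟨a, b, h1, h2, h3⟩
  · simp at h1
  · exact absurd h2 hpA
  · obtain rfl : v = a := by simpa using h1
    exact ⟨b, h2, h3⟩

lemma apex_case (hreg : ∀ v, (H.neighborSet v).ncard = 2)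
    {y p q r : Unit ⊕ Unit ⊕ Fin m} (hy : y ≠ A)
    (hpq : p ≠ q) (hpr : p ≠ r) (hqr : q ≠ r)
    (hpA : p ≠ A) (hqA : q ≠ A) (hrA : r ≠ A)
    (ayp : (apexPlusIsolated H).Adj y p) (ayq : (apexPlusIsolated H).Adj y q)
    (ayr : (apexPlusIsolated H).Adj y r) : False := by
  obtain (⟨⟩ | ⟨⟩ | v) := y
  · exact hy rfl
  · exact hpA (adj_I.mp ayp)
  · obtain ⟨p', rfl, hp'⟩ := hv_of_adj ayp hpA
    obtain ⟨q', rfl, hq'⟩ := hv_of_adj ayq hqA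
    obtain ⟨r', rfl, hr'⟩ := hv_of_adj ayr hrA
    obtain ⟨a, b, hab, _, _, hmem⟩ := two_neighbors hreg v
    rcases hmem p' hp' with rfl | rfl <;> rcases hmem q' hq' with rfl | rfl <;>
      rcases hmem r' hr' with rfl | rfl <;> simp_all

lemma c4_case
    (hC4 : ∀ a b c d : Fin m, a ≠ c → b ≠ d →
      H.Adj a b → H.Adj b c → H.Adj c d → H.Adj d a → False)
    {x' y' : Fin m} (hxy : x' ≠ y') {p q : Unit ⊕ Unit ⊕ Fin m}
    (hpq : p ≠ q) (hpA : p ≠ A) (hqA : q ≠ A)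
    (a1 : (apexPlusIsolated H).Adj (hv x') p) (a2 : (apexPlusIsolated H).Adj (hv y') p)
    (a3 : (apexPlusIsolated H).Adj (hv x') q) (a4 : (apexPlusIsolated H).Adj (hv y') q) :
    False := by
  obtain ⟨p', rfl, hp1⟩ := hv_of_adj a1 hpA
  obtain ⟨p'', hpp, hp2⟩ := hv_of_adj a2 hpA
  obtain rfl : p'' = p' := by simpa using hpp.symm
  obtain ⟨q', rfl, hq1⟩ := hv_of_adj a3 hqA
  obtain ⟨q'', hqq, hq2⟩ := hv_of_adj a4 hqA
  obtain rfl : q'' = q' := by simpa using hqq.symm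
  have hpq2 : p'' ≠ q'' := fun h => hpq (by rw [h])
  exact hC4 x' p'' y' q'' hxy hpq2 hp1 hp2.symm hq2 hq1.symm

lemma notK23 (hreg : ∀ v, (H.neighborSet v).ncard = 2)
    (hC4 : ∀ a b c d : Fin m, a ≠ c → b ≠ d →
      H.Adj a b → H.Adj b c → H.Adj c d → H.Adj d a → False) :
    ¬ HasK23 (apexPlusIsolated H) := by
  rintro ⟨f, hf⟩
  have axp : (apexPlusIsolated H).Adj (f (Sum.inl 0)) (f (Sum.inr 0)) := hf _ _ (by simp)
  have axq : (apexPlusIsolated H).Adj (f (Sum.inl 0)) (f (Sum.inr 1)) := hf _ _ (by simp)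
  have axr : (apexPlusIsolated H).Adj (f (Sum.inl 0)) (f (Sum.inr 2)) := hf _ _ (by simp)
  have ayp : (apexPlusIsolated H).Adj (f (Sum.inl 1)) (f (Sum.inr 0)) := hf _ _ (by simp)
  have ayq : (apexPlusIsolated H).Adj (f (Sum.inl 1)) (f (Sum.inr 1)) := hf _ _ (by simp)
  have ayr : (apexPlusIsolated H).Adj (f (Sum.inl 1)) (f (Sum.inr 2)) := hf _ _ (by simp)
  set x := f (Sum.inl 0) with hx
  set y := f (Sum.inl 1) with hy
  set p := f (Sum.inr 0) with hp
  set q := f (Sum.inr 1) with hq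
  set r := f (Sum.inr 2) with hr
  have hxy : x ≠ y := fun h => by simpa using f.injective h
  have hpq : p ≠ q := fun h => by simpa using f.injective h
  have hpr : p ≠ r := fun h => by simpa using f.injective h
  have hqr : q ≠ r := fun h => by simpa using f.injective h
  by_cases hxA : x = A
  · rw [hxA] at axp axq axr hxy
    exact apex_case hreg (Ne.symm hxy) hpq hpr hqr axp.ne' axq.ne' axr.ne' ayp ayq ayr
  · by_cases hyA : y = A
    · rw [hyA] at ayp ayq ayr
      exact apex_case hreg hxA hpq hpr hqr ayp.ne' ayq.ne' ayr.ne' axp axq axr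
    · obtain (⟨⟩ | ⟨⟩ | x') := x
      · exact hxA rfl
      · exact hpq ((adj_I.mp axp).trans (adj_I.mp axq).symm)
      · obtain (⟨⟩ | ⟨⟩ | y') := y
        · exact hyA rfl
        · exact hpq ((adj_I.mp ayp).trans (adj_I.mp ayq).symm)
        · have hxy' : x' ≠ y' := fun h => hxy (by rw [h])
          by_cases hpA : p = A
          · have hqA : q ≠ A := fun h => hpq (hpA.trans h.symm)
            have hrA : r ≠ A := fun h => hpr (hpA.trans h.symm)
            exact c4_case hC4 hxy' hqr hqA hrA axq ayq axr ayr
          · by_cases hqA : q = A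
            · have hrA : r ≠ A := fun h => hqr (hqA.trans h.symm)
              exact c4_case hC4 hxy' hpr hpA hrA axp ayp axr ayr
            · exact c4_case hC4 hxy' hpq hpA hqA axp ayp axq ayq

lemma sat_case_I (hreg : ∀ v, (H.neighborSet v).ncard = 2) (w : Fin m)
    {G' : SimpleGraph (Unit ⊕ Unit ⊕ Fin m)} (hle : apexPlusIsolated H ≤ G')
    (hnew : G'.Adj I (hv w)) : HasK23 G' := by
  obtain ⟨a, b, hab, ha, hb, -⟩ := two_neighbors hreg w
  have hwa : w ≠ a := H.ne_of_adj ha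
  have hwb : w ≠ b := H.ne_of_adj hb
  refine hasK23_of G' A (hv w) I (hv a) (hv b) (by simp) (by simp) (by simp)
    (by simp [hab]) (by simp) (by simp) (by simp) (by simp) (by simp [hwa]) (by simp [hwb])
    (hle (adj_A (by simp))) (hle (adj_A (by simp))) (hle (adj_A (by simp)))
    hnew.symm (hle (adj_hv.mpr ha)) (hle (adj_hv.mpr hb))

lemma sat_case_hh (hreg : ∀ v, (H.neighborSet v).ncard = 2) {c d : Fin m}
    (hcd : c ≠ d) (hnadj : ¬ H.Adj c d)
    {G' : SimpleGraph (Unit ⊕ Unit ⊕ Fin m)} (hle : apexPlusIsolated H ≤ G')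
    (hnew : G'.Adj (hv c) (hv d)) : HasK23 G' := by
  obtain ⟨a, b, hab, ha, hb, -⟩ := two_neighbors hreg c
  have hca : c ≠ a := H.ne_of_adj ha
  have hcb : c ≠ b := H.ne_of_adj hb
  have hda : d ≠ a := fun h => hnadj (h ▸ ha)
  have hdb : d ≠ b := fun h => hnadj (h ▸ hb)
  refine hasK23_of G' A (hv c) (hv d) (hv a) (hv b) (by simp) (by simp [hda])
    (by simp [hdb]) (by simp [hab]) (by simp) (by simp) (by simp)
    (by simp [hcd]) (by simp [hca]) (by simp [hcb])
    (hle (adj_A (by simp))) (hle (adj_A (by simp))) (hle (adj_A (by simp)))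
    hnew (hle (adj_hv.mpr ha)) (hle (adj_hv.mpr hb))

lemma sat (hreg : ∀ v, (H.neighborSet v).ncard = 2) :
    ∀ u v : Unit ⊕ Unit ⊕ Fin m, u ≠ v → ¬ (apexPlusIsolated H).Adj u v →
    HasK23 ((apexPlusIsolated H) ⊔ SimpleGraph.fromEdgeSet {s(u, v)}) := by
  intro u v huv hnadj
  set G' := (apexPlusIsolated H) ⊔ SimpleGraph.fromEdgeSet {s(u, v)} with hG'
  have hle : apexPlusIsolated H ≤ G' := le_sup_left
  have hnew : G'.Adj u v := Or.inr ((SimpleGraph.fromEdgeSet_adj _).mpr ⟨by simp, huv⟩)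
  have huA : u ≠ A := fun h => hnadj (h ▸ adj_A (h ▸ huv).symm)
  have hvA : v ≠ A := fun h => hnadj ((h ▸ (adj_A (h ▸ huv.symm).symm : (apexPlusIsolated H).Adj A u)).symm)
  obtain (⟨⟩ | ⟨⟩ | c) := u
  · exact absurd rfl huA
  · obtain (⟨⟩ | ⟨⟩ | d) := v
    · exact absurd rfl hvA
    · exact absurd rfl huv
    · exact sat_case_I hreg d hle hnew
  · obtain (⟨⟩ | ⟨⟩ | d) := v
    · exact absurd rfl hvA
    · exact sat_case_I hreg c hle hnew.symm
    · have hcd : c ≠ d := fun h => huv (by rw [h])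
      have : ¬ H.Adj c d := fun h => hnadj (adj_hv.mpr h)
      exact sat_case_hh hreg hcd this hle hnew

lemma hv_injective : Function.Injective (hv : Fin m → Unit ⊕ Unit ⊕ Fin m) :=
  fun a b h => by simpa using h

lemma neighborSet_A : (apexPlusIsolated H).neighborSet A = {A}ᶜ := by
  ext x
  simp only [SimpleGraph.mem_neighborSet, Set.mem_compl_iff, Set.mem_singleton_iff]
  exact ⟨fun h => h.ne', fun h => adj_A h⟩

lemma neighborSet_I : (apexPlusIsolated H).neighborSet I = {A} := by
  ext x
  simpa using adj_I

lemma neighborSet_hv (a : Fin m) :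
    (apexPlusIsolated H).neighborSet (hv a) = insert A (hv '' H.neighborSet a) := by
  ext x
  simp only [SimpleGraph.mem_neighborSet, Set.mem_insert_iff, Set.mem_image]
  constructor
  · intro h
    by_cases hxA : x = A
    · exact Or.inl hxA
    · obtain ⟨b, rfl, hb⟩ := hv_of_adj h hxA
      exact Or.inr ⟨b, hb, rfl⟩
  · rintro (rfl | ⟨b, hb, rfl⟩)
    · exact (adj_A (by simp)).symm
    · exact adj_hv.mpr hb

lemma ncard_nbr_A : ((apexPlusIsolated H).neighborSet (A : Unit ⊕ Unit ⊕ Fin m)).ncard = m + 1 := by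
  rw [neighborSet_A]
  have h := Set.ncard_add_ncard_compl ({A} : Set (Unit ⊕ Unit ⊕ Fin m))
  have h1 : ({A} : Set (Unit ⊕ Unit ⊕ Fin m)).ncard = 1 := Set.ncard_singleton _
  have h2 : Nat.card (Unit ⊕ Unit ⊕ Fin m) = m + 2 := by
    simp [Nat.card_eq_fintype_card]
    omega
  omega

lemma ncard_nbr_I : ((apexPlusIsolated H).neighborSet (I : Unit ⊕ Unit ⊕ Fin m)).ncard = 1 := by
  rw [neighborSet_I]; exact Set.ncard_singleton _

lemma ncard_nbr_hv (hreg : ∀ v, (H.neighborSet v).ncard = 2) (a : Fin m) :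
    ((apexPlusIsolated H).neighborSet (hv a)).ncard = 3 := by
  rw [neighborSet_hv]
  have hnm : A ∉ hv '' H.neighborSet a := by
    rintro ⟨b, -, hb⟩
    simp at hb
  rw [Set.ncard_insert_of_notMem hnm, Set.ncard_image_of_injective _ hv_injective, hreg]

lemma edge_count (hreg : ∀ v, (H.neighborSet v).ncard = 2) :
    (apexPlusIsolated H).edgeSet.ncard = 2 * m + 1 := by
  classical
  have hdeg : ∀ v, (apexPlusIsolated H).degree v = ((apexPlusIsolated H).neighborSet v).ncard := by
    intro v
    rw [← SimpleGraph.card_neighborFinset_eq_degree, SimpleGraph.neighborFinset_def,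
      Set.ncard_eq_toFinset_card']
  have hsum := SimpleGraph.sum_degrees_eq_twice_card_edges (apexPlusIsolated H)
  rw [Fintype.sum_sum_type] at hsum
  rw [Fintype.sum_sum_type] at hsum
  simp only [Finset.univ_unique, Finset.sum_singleton] at hsum
  rw [hdeg, hdeg] at hsum
  have hsum3 : ∀ a : Fin m, (apexPlusIsolated H).degree (hv a) = 3 := fun a =>
    (hdeg _).trans (ncard_nbr_hv hreg a)
  rw [ncard_nbr_A, ncard_nbr_I] at hsum
  rw [Finset.sum_congr rfl (fun a _ => hsum3 a), Finset.sum_const, Finset.card_univ] at hsum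
  simp only [Fintype.card_fin, smul_eq_mul] at hsum
  rw [← SimpleGraph.coe_edgeFinset, Set.ncard_coe_finset]
  omega

end K23Aux

theorem apexPlusIsolated_saturated (m : ℕ) (hm : 3 ≤ m) (H : SimpleGraph (Fin m))
    (hreg : ∀ v, (H.neighborSet v).ncard = 2)
    (hC4 : ∀ a b c d : Fin m, a ≠ c → b ≠ d →
      H.Adj a b → H.Adj b c → H.Adj c d → H.Adj d a → False) :
    K23Saturated (apexPlusIsolated H) ∧
      (apexPlusIsolated H).edgeSet.ncard = 2 * (m + 2) - 3 := by
  refine ⟨⟨K23Aux.notK23 hreg hC4, K23Aux.sat hreg⟩, ?_⟩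
  rw [K23Aux.edge_count hreg]
  omega
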